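/- Let G be a bipartite graph with vertex weights w : V(G) → ℕ₊ and let z be a maximum w-matching. If w(v) > z(E_v) for some vertex v (i.e., vertex v is not saturated by z), then no minimum-weight vertex cover of (G, w) contains v. -/

import Mathlib

open Finset

variable {V : Type*}

variable {V : Type*}

/-- A set of vertices covering every edge. -/
def IsVertexCover (G : SimpleGraph V) (C : Finset V) : Prop :=
  ∀ ⦃u v : V⦄, G.Adj u v → u ∈ C ∨ v ∈ C

/-- A minimum-weight vertex cover for vertex weights `w`. -/
def IsMinVertexCover [Fintype V] (G : SimpleGraph V) (w : V → ℕ) (C : Finset V) : Prop :=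
  IsVertexCover G C ∧
    ∀ C' : Finset V, IsVertexCover G C' → ∑ x ∈ C, w x ≤ ∑ x ∈ C', w x

/-- A `w`-matching: an assignment of naturals to edges whose total at each vertex is at
most the vertex weight. -/
def IsWMatching [Fintype V] [DecidableEq V] (G : SimpleGraph V) [DecidableRel G.Adj]
    (w : V → ℕ) (z : Sym2 V → ℕ) : Prop :=
  ∀ v : V, ∑ e ∈ G.edgeFinset.filter (fun e => v ∈ e), z e ≤ w v

/-- A maximum `w`-matching: a `w`-matching of maximum total value. -/
def IsMaxWMatching [Fintype V] [DecidableEq V] (G : SimpleGraph V) [DecidableRel G.Adj]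
    (w : V → ℕ) (z : Sym2 V → ℕ) : Prop :=
  IsWMatching G w z ∧
    ∀ z' : Sym2 V → ℕ, IsWMatching G w z' →
      ∑ e ∈ G.edgeFinset, z' e ≤ ∑ e ∈ G.edgeFinset, z e


set_option linter.unusedSectionVars false
set_option maxHeartbeats 1000000

section AuxKonig

variable [Fintype V] [DecidableEq V]

private lemma fin2_eq {x y z : Fin 2} (h1 : x ≠ z) (h2 : y ≠ z) : x = y := by
  fin_cases x <;> fin_cases y <;> fin_cases z <;> simp_all

/-- Sum of `z` over edges incident to `x`. -/
def wdeg (G : SimpleGraph V) [DecidableRel G.Adj] (z : Sym2 V → ℕ) (x : V) : ℕ :=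
  ∑ e ∈ G.edgeFinset.filter (fun e => x ∈ e), z e

/-- Alternating reachability from `v`: `false` marks vertices reachable at even
distance (same side as `v`), `true` at odd distance; odd → even steps must use an
edge with positive `z` value. The `ℕ` index records the length of the walk. -/
inductive AltReach (G : SimpleGraph V) (z : Sym2 V → ℕ) (v : V) : Bool → V → ℕ → Prop
  | base : AltReach G z v false v 0
  | stepAny {a b : V} {n : ℕ} : AltReach G z v false a n → G.Adj a b →
      AltReach G z v true b (n + 1)
  | stepPos {b a : V} {n : ℕ} : AltReach G z v true b n → G.Adj b a →
      0 < z s(b, a) → AltReach G z v false a (n + 1)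

lemma altReach_color {G : SimpleGraph V} {z : Sym2 V → ℕ} {v : V}
    (c : G.Coloring (Fin 2)) {par : Bool} {x : V} {n : ℕ}
    (h : AltReach G z v par x n) : cond par (c x ≠ c v) (c x = c v) := by
  induction h with
  | base => rfl
  | stepAny h hadj ih =>
      simp only [cond] at ih ⊢
      intro hxv
      exact c.valid hadj (by rw [ih, hxv])
  | stepPos h hadj hpos ih =>
      simp only [cond] at ih ⊢
      exact fin2_eq (fun hh => c.valid hadj hh.symm) (Ne.symm ih)

lemma sum_shift (s : Finset (Sym2 V)) (z z' : Sym2 V → ℕ) (e₁ e₂ : Sym2 V)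
    (hpt : ∀ e, z' e + (if e = e₂ then 1 else 0) = z e + (if e = e₁ then 1 else 0)) :
    (∑ e ∈ s, z' e) + (if e₂ ∈ s then 1 else 0)
      = (∑ e ∈ s, z e) + (if e₁ ∈ s then 1 else 0) := by
  rw [← Finset.sum_ite_eq' s e₂ (fun _ => (1 : ℕ)),
      ← Finset.sum_ite_eq' s e₁ (fun _ => (1 : ℕ)),
      ← Finset.sum_add_distrib, ← Finset.sum_add_distrib]
  exact Finset.sum_congr rfl fun e _ => hpt e

lemma wdeg_shift {G : SimpleGraph V} [DecidableRel G.Adj] {z z' : Sym2 V → ℕ}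
    {e₁ e₂ : Sym2 V} (he₁ : e₁ ∈ G.edgeFinset) (he₂ : e₂ ∈ G.edgeFinset)
    (hpt : ∀ e, z' e + (if e = e₂ then 1 else 0) = z e + (if e = e₁ then 1 else 0)) (x : V) :
    wdeg G z' x + (if x ∈ e₂ then 1 else 0) = wdeg G z x + (if x ∈ e₁ then 1 else 0) := by
  have h := sum_shift (G.edgeFinset.filter (fun e => x ∈ e)) z z' e₁ e₂ hpt
  simpa [wdeg, Finset.mem_filter, he₁, he₂] using h

lemma wdeg_sum {G : SimpleGraph V} [DecidableRel G.Adj] (z : Sym2 V → ℕ) (S : Finset V) :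
    ∑ x ∈ S, wdeg G z x
      = ∑ e ∈ G.edgeFinset, z e * (S.filter (fun x => x ∈ e)).card := by
  unfold wdeg
  simp_rw [Finset.sum_filter]
  rw [Finset.sum_comm]
  refine Finset.sum_congr rfl fun e _ => ?_
  rw [← Finset.sum_filter, Finset.sum_const, smul_eq_mul, mul_comm]

lemma sum_incr (s : Finset (Sym2 V)) (z : Sym2 V → ℕ) (e₁ : Sym2 V) :
    (∑ e ∈ s, if e = e₁ then z e + 1 else z e)
      = (∑ e ∈ s, z e) + (if e₁ ∈ s then 1 else 0) := by
  rw [← Finset.sum_ite_eq' s e₁ (fun _ => (1 : ℕ)), ← Finset.sum_add_distrib]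
  refine Finset.sum_congr rfl fun e _ => ?_
  split_ifs <;> simp

lemma wdeg_incr {G : SimpleGraph V} [DecidableRel G.Adj] (z : Sym2 V → ℕ)
    {e₁ : Sym2 V} (he₁ : e₁ ∈ G.edgeFinset) (x : V) :
    wdeg G (fun e => if e = e₁ then z e + 1 else z e) x
      = wdeg G z x + (if x ∈ e₁ then 1 else 0) := by
  unfold wdeg
  rw [sum_incr]
  simp [Finset.mem_filter, he₁]

lemma altReach_mono {G : SimpleGraph V} {z z' : Sym2 V → ℕ} {v a₀ b₀ : V}
    (c : G.Coloring (Fin 2)) (ha₀ : c a₀ = c v)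
    (hz' : ∀ e, e ≠ s(b₀, a₀) → 0 < z e → 0 < z' e)
    {par : Bool} {x : V} {n : ℕ} (h : AltReach G z v par x n) :
    AltReach G z' v par x n ∨ ∃ m < n, AltReach G z v true b₀ m := by
  induction h with
  | base => exact Or.inl .base
  | stepAny h hadj ih =>
      rcases ih with h' | ⟨m, hm, h'⟩
      · exact Or.inl (h'.stepAny hadj)
      · exact Or.inr ⟨m, Nat.lt_succ_of_lt hm, h'⟩
  | @stepPos b a n h hadj hpos ih =>
      by_cases he : s(b, a) = s(b₀, a₀)
      · rcases Sym2.eq_iff.mp he with ⟨hb, -⟩ | ⟨hb, -⟩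
        · subst hb
          exact Or.inr ⟨n, Nat.lt_succ_self n, h⟩
        · exfalso
          have hcb : c b ≠ c v := altReach_color c h
          rw [hb, ha₀] at hcb
          exact hcb rfl
      · rcases ih with h' | ⟨m, hm, h'⟩
        · exact Or.inl (h'.stepPos hadj (hz' _ he hpos))
        · exact Or.inr ⟨m, Nat.lt_succ_of_lt hm, h'⟩

lemma sat_of_maxMatching {G : SimpleGraph V} [DecidableRel G.Adj]
    (c : G.Coloring (Fin 2)) {w : V → ℕ} {v : V} :
    ∀ (n : ℕ) (z : Sym2 V → ℕ), IsWMatching G w z →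
      (∀ z', IsWMatching G w z' → ∑ e ∈ G.edgeFinset, z' e ≤ ∑ e ∈ G.edgeFinset, z e) →
      wdeg G z v < w v →
      ∀ b, AltReach G z v true b n → wdeg G z b < w b → False := by
  intro n
  induction n using Nat.strong_induction_on with
  | _ n ih =>
    intro z hm hmax hv b hreach hb
    have hmw : ∀ x, wdeg G z x ≤ w x := hm
    cases hreach with
    | @stepAny a b m ha hadj =>
      have hcb : c b ≠ c v := altReach_color c (ha.stepAny hadj)
      cases ha with
      | base =>
        -- augment along the single edge s(v, b)
        have heab : s(v, b) ∈ G.edgeFinset := by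
          rw [SimpleGraph.mem_edgeFinset, SimpleGraph.mem_edgeSet]; exact hadj
        set z₁ : Sym2 V → ℕ := fun e => if e = s(v, b) then z e + 1 else z e with hz₁
        have hm₁ : IsWMatching G w z₁ := by
          intro x
          show wdeg G z₁ x ≤ w x
          have hx : wdeg G z₁ x = wdeg G z x + (if x ∈ s(v, b) then 1 else 0) :=
            wdeg_incr z heab x
          by_cases hmem : x ∈ s(v, b)
          · rcases Sym2.mem_iff.mp hmem with rfl | rfl
            · rw [hx, if_pos hmem]; omega
            · rw [hx, if_pos hmem]; omega
          · rw [hx, if_neg hmem]; simpa using hmw x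
        have htot : (∑ e ∈ G.edgeFinset, z₁ e) = (∑ e ∈ G.edgeFinset, z e) + 1 := by
          rw [hz₁, sum_incr, if_pos heab]
        have := hmax z₁ hm₁
        omega
      | @stepPos b₀ a k h' hadj' hpos =>
        -- a reached from b₀ along a positive edge
        have hcb₀ : c b₀ ≠ c v := altReach_color c h'
        have hca : c a = c v := altReach_color c (h'.stepPos hadj' hpos)
        by_cases hbb : b₀ = b
        · subst hbb
          exact ih k (by omega) z hm hmax hv b₀ h' hb
        · have hab : a ≠ b := hadj.ne
          have hab₀ : a ≠ b₀ := fun hh => hcb₀ (by rw [← hh]; exact hca)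
          have hvb : v ≠ b := fun hh => hcb (hh ▸ rfl)
          have hvb₀ : v ≠ b₀ := fun hh => hcb₀ (hh ▸ rfl)
          have hne : s(a, b) ≠ s(b₀, a) := by
            intro hh
            rcases Sym2.eq_iff.mp hh with ⟨h1, -⟩ | ⟨-, h2⟩
            · exact hab₀ h1
            · exact hbb h2.symm
          have heab : s(a, b) ∈ G.edgeFinset := by
            rw [SimpleGraph.mem_edgeFinset, SimpleGraph.mem_edgeSet]; exact hadj
          have heps : s(b₀, a) ∈ G.edgeFinset := by
            rw [SimpleGraph.mem_edgeFinset, SimpleGraph.mem_edgeSet]; exact hadj'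
          set z' : Sym2 V → ℕ :=
            fun e => if e = s(a, b) then z e + 1 else if e = s(b₀, a) then z e - 1 else z e
            with hz'def
          have hpt : ∀ e, z' e + (if e = s(b₀, a) then 1 else 0)
              = z e + (if e = s(a, b) then 1 else 0) := by
            intro e
            by_cases h1 : e = s(a, b)
            · subst h1
              rw [if_neg hne]
              simp [hz'def, hne]
            · by_cases h2 : e = s(b₀, a)
              · subst h2
                simp only [hz'def, if_neg h1, if_pos rfl, if_true]
                omega
              · simp [hz'def, h1, h2]
          have key : ∀ x, wdeg G z' x + (if x ∈ s(b₀, a) then 1 else 0)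
              = wdeg G z x + (if x ∈ s(a, b) then 1 else 0) :=
            wdeg_shift heab heps hpt
          have hbmem : b ∉ s(b₀, a) := by
            rw [Sym2.mem_iff]; push_neg; exact ⟨Ne.symm hbb, Ne.symm hab⟩
          have hb₀mem : b₀ ∉ s(a, b) := by
            rw [Sym2.mem_iff]; push_neg; exact ⟨Ne.symm hab₀, hbb⟩
          -- z' is a matching
          have hm' : IsWMatching G w z' := by
            intro x
            show wdeg G z' x ≤ w x
            have hx := key x
            by_cases hxb : x = b
            · subst hxb
              rw [if_neg hbmem, if_pos (Sym2.mem_mk_right a x)] at hx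
              omega
            · by_cases hxb₀ : x = b₀
              · subst hxb₀
                rw [if_pos (Sym2.mem_mk_left x a), if_neg hb₀mem] at hx
                have := hmw x
                omega
              · have := hmw x
                by_cases hxa : x = a
                · rw [if_pos (by rw [hxa]; exact Sym2.mem_mk_right b₀ a),
                      if_pos (by rw [hxa]; exact Sym2.mem_mk_left a b)] at hx
                  omega
                · rw [if_neg (by rw [Sym2.mem_iff]; push_neg; exact ⟨hxb₀, hxa⟩),
                      if_neg (by rw [Sym2.mem_iff]; push_neg; exact ⟨hxa, hxb⟩)] at hx
                  omega
          -- total value unchanged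
          have htot : (∑ e ∈ G.edgeFinset, z' e) = (∑ e ∈ G.edgeFinset, z e) := by
            have := sum_shift G.edgeFinset z z' s(a, b) s(b₀, a) hpt
            rw [if_pos heab, if_pos heps] at this
            omega
          have hmax' : ∀ z'', IsWMatching G w z'' →
              ∑ e ∈ G.edgeFinset, z'' e ≤ ∑ e ∈ G.edgeFinset, z' e := by
            intro z'' h''
            rw [htot]; exact hmax z'' h''
          -- v still unsaturated
          have hv' : wdeg G z' v < w v := by
            have hx := key v
            by_cases hva : v = a
            · rw [if_pos (by rw [hva]; exact Sym2.mem_mk_right b₀ a),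
                  if_pos (by rw [hva]; exact Sym2.mem_mk_left a b)] at hx
              omega
            · rw [if_neg (by rw [Sym2.mem_iff]; push_neg; exact ⟨hvb₀, hva⟩),
                  if_neg (by rw [Sym2.mem_iff]; push_neg; exact ⟨hva, hvb⟩)] at hx
              omega
          -- b₀ unsaturated for z'
          have hb₀' : wdeg G z' b₀ < w b₀ := by
            have hx := key b₀
            rw [if_pos (Sym2.mem_mk_left b₀ a), if_neg hb₀mem] at hx
            have := hmw b₀
            omega
          -- b₀ is still odd-reachable for z', with a walk of length ≤ k
          have hPex : ∃ m, AltReach G z v true b₀ m := ⟨k, h'⟩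
          classical
          have hfind := Nat.find_spec hPex
          have hfle : Nat.find hPex ≤ k := Nat.find_le h'
          have hz'pos : ∀ e, e ≠ s(b₀, a) → 0 < z e → 0 < z' e := by
            intro e hne' hpos'
            simp only [hz'def]
            split_ifs <;> omega
          rcases altReach_mono c hca hz'pos hfind with h'' | ⟨m', hm'', h''⟩
          · exact ih (Nat.find hPex) (by omega) z' hm' hmax' hv' b₀ h'' hb₀'
          · exact absurd h'' (Nat.find_min hPex hm'')

end AuxKonig

/-- If vertex `v` is unsaturated by a maximum `w`-matching of a bipartite
graph (its weight exceeds the total matching value on incident edges), then no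
minimum-weight vertex cover contains `v`. -/
theorem stmt_4 [Fintype V] [DecidableEq V] (G : SimpleGraph V) [DecidableRel G.Adj]
    (hbip : G.Colorable 2) (w : V → ℕ) (hw : ∀ x, 0 < w x)
    (z : Sym2 V → ℕ) (hz : IsMaxWMatching G w z)
    (v : V) (hv : ∑ e ∈ G.edgeFinset.filter (fun e => v ∈ e), z e < w v)
    (C : Finset V) (hC : IsMinVertexCover G w C) :
    v ∉ C := by
  classical
  intro hvC
  obtain ⟨c⟩ := hbip
  have hv' : wdeg G z v < w v := hv
  have hmw : ∀ x, wdeg G z x ≤ w x := hz.1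
  set A' : Finset V := univ.filter (fun x => ∃ n, AltReach G z v false x n) with hA'
  set B' : Finset V := univ.filter (fun x => ∃ n, AltReach G z v true x n) with hB'
  have hmemA : ∀ x, x ∈ A' ↔ ∃ n, AltReach G z v false x n := by
    intro x; simp [hA']
  have hmemB : ∀ x, x ∈ B' ↔ ∃ n, AltReach G z v true x n := by
    intro x; simp [hB']
  have hcolA : ∀ x ∈ A', c x = c v := by
    intro x hx
    rcases (hmemA x).mp hx with ⟨n, h⟩
    exact altReach_color c h
  have hcolB : ∀ x ∈ B', c x ≠ c v := by
    intro x hx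
    rcases (hmemB x).mp hx with ⟨n, h⟩
    exact altReach_color c h
  have hvA : v ∈ A' := (hmemA v).mpr ⟨0, .base⟩
  set C' : Finset V := (C \ A') ∪ (B' \ C) with hC'def
  have hone : ∀ x y, G.Adj x y → x ∈ C → x ∈ C' ∨ y ∈ C' := by
    intro x y hadj hxC
    by_cases hxA : x ∈ A'
    · rcases (hmemA x).mp hxA with ⟨n, hx⟩
      have hyB : y ∈ B' := (hmemB y).mpr ⟨n + 1, hx.stepAny hadj⟩
      by_cases hyC : y ∈ C
      · refine Or.inr (Finset.mem_union_left _ (Finset.mem_sdiff.mpr ⟨hyC, ?_⟩))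
        intro hyA
        exact hcolB y hyB (hcolA y hyA)
      · exact Or.inr (Finset.mem_union_right _ (Finset.mem_sdiff.mpr ⟨hyB, hyC⟩))
    · exact Or.inl (Finset.mem_union_left _ (Finset.mem_sdiff.mpr ⟨hxC, hxA⟩))
  have hcov : IsVertexCover G C' := by
    intro x y hadj
    rcases hC.1 hadj with hxC | hyC
    · exact hone x y hadj hxC
    · exact (hone y x hadj.symm hyC).symm
  have hsatB : ∀ b ∈ B', w b ≤ wdeg G z b := by
    intro b hb
    by_contra hlt
    push_neg at hlt
    rcases (hmemB b).mp hb with ⟨n, h⟩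
    exact sat_of_maxMatching c n z hz.1 hz.2 hv' b h hlt
  have hback : ∀ x y : V, G.Adj x y → 0 < z s(x, y) → y ∈ B' \ C → x ∈ A' ∩ C := by
    intro x y hadj hpos hy
    rw [Finset.mem_sdiff] at hy
    rcases (hmemB y).mp hy.1 with ⟨n, hAy⟩
    have hxA : x ∈ A' :=
      (hmemA x).mpr ⟨n + 1, hAy.stepPos hadj.symm (by rw [Sym2.eq_swap]; exact hpos)⟩
    have hxC : x ∈ C := by
      rcases hC.1 hadj with h | h
      · exact h
      · exact absurd h hy.2
    exact Finset.mem_inter.mpr ⟨hxA, hxC⟩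
  have hcount : ∑ b ∈ B' \ C, wdeg G z b ≤ ∑ a ∈ A' ∩ C, wdeg G z a := by
    rw [wdeg_sum, wdeg_sum]
    refine Finset.sum_le_sum ?_
    intro e he
    revert he
    induction e using Sym2.inductionOn with
    | _ x y =>
      intro he
      have hadj : G.Adj x y := by
        rwa [SimpleGraph.mem_edgeFinset, SimpleGraph.mem_edgeSet] at he
      rcases Nat.eq_zero_or_pos (z s(x, y)) with h0 | hpos
      · simp [h0]
      refine Nat.mul_le_mul_left _ ?_
      have hcard1 : ((B' \ C).filter (fun t => t ∈ s(x, y))).card ≤ 1 := by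
        rw [Finset.card_le_one]
        intro t₁ h₁ t₂ h₂
        rw [Finset.mem_filter, Finset.mem_sdiff] at h₁ h₂
        have hcxy : c x ≠ c y := c.valid hadj
        rcases Sym2.mem_iff.mp h₁.2 with rfl | rfl <;>
          rcases Sym2.mem_iff.mp h₂.2 with rfl | rfl
        · rfl
        · exact absurd (fin2_eq (hcolB t₁ h₁.1.1) (hcolB t₂ h₂.1.1)) hcxy
        · exact absurd (fin2_eq (hcolB t₂ h₂.1.1) (hcolB t₁ h₁.1.1)) hcxy
        · rfl
      by_cases hBc : ((B' \ C).filter (fun t => t ∈ s(x, y))).Nonempty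
      · have hcard2 : 1 ≤ ((A' ∩ C).filter (fun t => t ∈ s(x, y))).card := by
          obtain ⟨b, hbmem⟩ := hBc
          rw [Finset.mem_filter] at hbmem
          obtain ⟨hbBC, hbe⟩ := hbmem
          rcases Sym2.mem_iff.mp hbe with hb | hb
          · refine Finset.card_pos.mpr ⟨y, Finset.mem_filter.mpr ⟨?_, Sym2.mem_mk_right x y⟩⟩
            exact hback y x hadj.symm (by rw [Sym2.eq_swap]; exact hpos) (hb ▸ hbBC)
          · refine Finset.card_pos.mpr ⟨x, Finset.mem_filter.mpr ⟨?_, Sym2.mem_mk_left x y⟩⟩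
            exact hback x y hadj hpos (hb ▸ hbBC)
        omega
      · rw [Finset.not_nonempty_iff_eq_empty] at hBc
        rw [hBc]
        simp
  have hchain : ∑ b ∈ B' \ C, w b < ∑ a ∈ A' ∩ C, w a := by
    calc ∑ b ∈ B' \ C, w b ≤ ∑ b ∈ B' \ C, wdeg G z b :=
          Finset.sum_le_sum fun b hb => hsatB b (Finset.mem_sdiff.mp hb).1
      _ ≤ ∑ a ∈ A' ∩ C, wdeg G z a := hcount
      _ < ∑ a ∈ A' ∩ C, w a :=
          Finset.sum_lt_sum (fun a _ => hmw a) ⟨v, Finset.mem_inter.mpr ⟨hvA, hvC⟩, hv'⟩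
  have hdisj : Disjoint (C \ A') (B' \ C) := by
    rw [Finset.disjoint_left]
    intro t ht ht'
    exact (Finset.mem_sdiff.mp ht').2 (Finset.mem_sdiff.mp ht).1
  have hsplit : ∑ x ∈ C', w x = ∑ x ∈ C \ A', w x + ∑ x ∈ B' \ C, w x := by
    rw [hC'def, Finset.sum_union hdisj]
  have hCsplit : ∑ x ∈ C ∩ A', w x + ∑ x ∈ C \ A', w x = ∑ x ∈ C, w x :=
    Finset.sum_inter_add_sum_sdiff C A' w
  have hcomm : ∑ x ∈ A' ∩ C, w x = ∑ x ∈ C ∩ A', w x := by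
    rw [Finset.inter_comm]
  have hle := hC.2 C' hcov
  omega
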